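/- Let (Ω, μ) be a finite probability space, and let f, h, Y : Ω → ℝ be random variables. Fix v ∈ ℝ and suppose the event S = {ω : f(ω) = v} has positive probability. If E[h·(Y - v) | S] ≥ α for some α > 0 and E[h² | S] > 0, then the function h'(ω) = v + η·h(ω) with η = α / E[h² | S] satisfies E[(f - Y)² - (h' - Y)² | S] ≥ α² / E[h² | S]. -/

import Mathlib

open scoped Classical
open Finset

variable {Ω : Type*}

/-- Probability of an event `S` under weight function `μ` on a finite space. -/
noncomputable def prEv [Fintype Ω] (μ : Ω → ℝ) (S : Set Ω) : ℝ :=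
  ∑ ω : Ω, if ω ∈ S then μ ω else 0

/-- Conditional expectation of `g` given the event `S`. -/
noncomputable def cexp [Fintype Ω] (μ : Ω → ℝ) (S : Set Ω) (g : Ω → ℝ) : ℝ :=
  (∑ ω : Ω, if ω ∈ S then μ ω * g ω else 0) / prEv μ S

/-- (Unconditional) expectation of `g`. -/
noncomputable def exv [Fintype Ω] (μ : Ω → ℝ) (g : Ω → ℝ) : ℝ :=
  ∑ ω : Ω, μ ω * g ω

lemma cexp_congr [Fintype Ω] (μ : Ω → ℝ) (S : Set Ω) (g g' : Ω → ℝ)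
    (hgg : ∀ ω ∈ S, g ω = g' ω) : cexp μ S g = cexp μ S g' := by
  unfold cexp
  congr 1
  refine Finset.sum_congr rfl fun ω _ => ?_
  by_cases hω : ω ∈ S <;> simp [hω, hgg]

lemma cexp_lin [Fintype Ω] (μ : Ω → ℝ) (S : Set Ω) (g g' : Ω → ℝ) (a b : ℝ) :
    cexp μ S (fun ω => a * g ω + b * g' ω) = a * cexp μ S g + b * cexp μ S g' := by
  unfold cexp
  rw [mul_div_assoc', mul_div_assoc', ← add_div, Finset.mul_sum, Finset.mul_sum,
    ← Finset.sum_add_distrib]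
  congr 1
  refine Finset.sum_congr rfl fun ω _ => ?_
  by_cases hω : ω ∈ S <;> simp [hω] <;> ring

/-- a multicalibration violation of magnitude α by h on the level set
{f = v} yields an improving function h' = v + η·h with η = α / E[h² | f = v]. -/
theorem stmt_0 [Fintype Ω] (μ : Ω → ℝ) (hμ : ∀ ω, 0 ≤ μ ω) (hμ1 : ∑ ω : Ω, μ ω = 1)
    (f h Y : Ω → ℝ) (v α : ℝ) (hα : 0 < α)
    (hS : 0 < prEv μ {ω | f ω = v})
    (hcorr : α ≤ cexp μ {ω | f ω = v} (fun ω => h ω * (Y ω - v)))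
    (hh2 : 0 < cexp μ {ω | f ω = v} (fun ω => h ω ^ 2)) :
    α ^ 2 / cexp μ {ω | f ω = v} (fun ω => h ω ^ 2) ≤
      cexp μ {ω | f ω = v} (fun ω =>
        (f ω - Y ω) ^ 2 -
          ((v + (α / cexp μ {ω' | f ω' = v} (fun ω' => h ω' ^ 2)) * h ω) - Y ω) ^ 2) := by
  set S : Set Ω := {ω | f ω = v} with hSdef
  set E := cexp μ S (fun ω => h ω ^ 2) with hE
  set η := α / E with hη
  have hη0 : 0 < η := div_pos hα hh2
  have key : cexp μ S (fun ω =>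
      (f ω - Y ω) ^ 2 - ((v + η * h ω) - Y ω) ^ 2)
      = (2 * η) * cexp μ S (fun ω => h ω * (Y ω - v)) + (-(η ^ 2)) * E := by
    rw [hE, ← cexp_lin]
    apply cexp_congr
    intro ω hω
    have : f ω = v := hω
    rw [this]
    ring
  rw [key]
  have h1 : (2 * η) * α ≤ (2 * η) * cexp μ S (fun ω => h ω * (Y ω - v)) := by
    apply mul_le_mul_of_nonneg_left hcorr
    positivity
  have h2 : (2 * η) * α + (-(η ^ 2)) * E = α ^ 2 / E := by
    rw [hη]
    field_simp
    ring
  linarith
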